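/- Let λ, λ' be vectors in ℓ²(ℕ) and suppose there exists j₀ ∈ ℕ with λ(j) = λ'(j) for all j < j₀ and λ(j₀) > λ'(j₀) ≥ 0, where both λ and λ' are nonincreasing and nonnegative. If (V_j) are i.i.d. real random variables with a moment generating function finite exactly on an open interval (-t₀, t₀) with t₀ ∈ (0,∞), and diverging as t → t₀, then the random variables ∑_j λ(j) V_j and ∑_j λ'(j) V_j (series converging in L²) have different distributions, provided the corresponding truncated series are independent of the initial common part. -/

import Mathlib

open MeasureTheory ProbabilityTheory Filter Real
open scoped ENNReal NNReal

/-- exp|u| ≤ exp u + exp (-u) -/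
lemma SK.exp_abs_le (u : ℝ) : rexp |u| ≤ rexp u + rexp (-u) := by
  rcases abs_cases u with ⟨h, _⟩ | ⟨h, _⟩ <;> rw [h] <;>
    [linarith [Real.exp_pos (-u)]; linarith [Real.exp_pos u]]

/-- single power series term bound: x^n / n! ≤ exp x for x ≥ 0 -/
lemma SK.pow_div_factorial_le_exp {x : ℝ} (hx : 0 ≤ x) (n : ℕ) :
    x ^ n / n.factorial ≤ rexp x := by
  have := Real.sum_le_exp_of_nonneg hx (n + 1)
  have hterm : x ^ n / n.factorial ≤ ∑ i ∈ Finset.range (n + 1), x ^ i / i.factorial := by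
    refine Finset.single_le_sum (f := fun i => x ^ i / (i.factorial : ℝ)) ?_ (Finset.self_mem_range_succ n)
    intro i _; positivity
  linarith

/-- |x| ≤ (exp (εx) + exp (-εx))/ε for ε > 0 -/
lemma SK.abs_le_exp_add {ε : ℝ} (hε : 0 < ε) (x : ℝ) :
    |x| ≤ (rexp (ε * x) + rexp (-(ε * x))) / ε := by
  rw [le_div_iff₀ hε]
  have h1 : ε * |x| ≤ rexp (ε * |x|) := by linarith [Real.add_one_le_exp (ε * |x|)]
  have h2 : rexp (ε * |x|) ≤ rexp (ε * x) + rexp (-(ε * x)) := by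
    have : ε * |x| = |ε * x| := by rw [abs_mul, abs_of_pos hε]
    rw [this]; simpa using SK.exp_abs_le (ε * x)
  calc |x| * ε = ε * |x| := mul_comm _ _
  _ ≤ _ := le_trans h1 h2

/-- x² ≤ (2/ε²)(exp(εx)+exp(-εx)) -/
lemma SK.sq_le_exp_add {ε : ℝ} (hε : 0 < ε) (x : ℝ) :
    x ^ 2 ≤ 2 / ε ^ 2 * (rexp (ε * x) + rexp (-(ε * x))) := by
  have h1 : (ε * |x|) ^ 2 / (2 : ℕ).factorial ≤ rexp (ε * |x|) :=
    SK.pow_div_factorial_le_exp (by positivity) 2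
  have h2 : rexp (ε * |x|) ≤ rexp (ε * x) + rexp (-(ε * x)) := by
    have : ε * |x| = |ε * x| := by rw [abs_mul, abs_of_pos hε]
    rw [this]; simpa using SK.exp_abs_le (ε * x)
  have h3 : (ε * |x|) ^ 2 = ε ^ 2 * x ^ 2 := by
    rw [mul_pow, sq_abs]
  have hε2 : (0:ℝ) < ε ^ 2 := by positivity
  rw [Nat.factorial] at h1
  norm_num at h1
  have key : ε ^ 2 * x ^ 2 ≤ 2 * (rexp (ε * x) + rexp (-(ε * x))) := by nlinarith
  rw [div_mul_eq_mul_div, le_div_iff₀ hε2]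
  linarith [key]

/-- e^x ≤ 1 + x + x²(e^x + e^{-x}) -/
lemma SK.exp_le_one_add_add (x : ℝ) : rexp x ≤ 1 + x + x ^ 2 * (rexp x + rexp (-x)) := by
  rcases le_or_gt |x| 1 with h | h
  · have h1 := Real.abs_exp_sub_one_sub_id_le h
    have h2 : rexp x + rexp (-x) ≥ 1 := by
      rcases le_or_gt 0 x with hx | hx
      · linarith [Real.one_le_exp hx, Real.exp_pos (-x)]
      · linarith [Real.one_le_exp (by linarith : 0 ≤ -x), Real.exp_pos x]
    have := abs_le.mp h1
    nlinarith [sq_nonneg x]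
  · have hx2 : 1 ≤ x ^ 2 := by nlinarith [abs_nonneg x, sq_abs x]
    rcases le_or_gt 0 x with hx | hx
    · nlinarith [Real.exp_pos x, Real.exp_pos (-x)]
    · have h1 : rexp x ≤ 1 := Real.exp_le_one_iff.mpr (le_of_lt hx)
      have h2 : -x ≤ rexp (-x) := by linarith [Real.add_one_le_exp (-x)]
      nlinarith [Real.exp_pos x, Real.exp_pos (-x)]

/-- measurability of a pointwise tsum of real functions -/
lemma SK.measurable_tsum {α : Type*} {m : MeasurableSpace α} {f : ℕ → α → ℝ}
    (hf : ∀ n, Measurable (f n)) : Measurable (fun a => ∑' n, f n a) := by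
  classical
  set E : Set α := {a | (∑' n, (‖f n a‖₊ : ℝ≥0∞)) < ⊤} with hE
  have hEmeas : MeasurableSet E := by
    have : Measurable fun a => ∑' n, (‖f n a‖₊ : ℝ≥0∞) :=
      Measurable.ennreal_tsum fun n => (hf n).nnnorm.coe_nnreal_ennreal
    exact this (measurableSet_Iio (a := (⊤ : ℝ≥0∞)))
  have hsummable : ∀ a, a ∈ E ↔ Summable fun n => f n a := by
    intro a
    rw [hE, Set.mem_setOf_eq, lt_top_iff_ne_top, ENNReal.tsum_coe_ne_top_iff_summable]
    constructor
    · intro h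
      rw [← summable_abs_iff]
      simpa [← NNReal.summable_coe, Real.nnnorm_abs] using h
    · intro h
      rw [← summable_abs_iff] at h
      rw [← NNReal.summable_coe]
      simpa [Real.norm_eq_abs] using h
  have htend : Tendsto (fun N => fun a => E.indicator (fun a => ∑ n ∈ Finset.range N, f n a) a)
      atTop (nhds (fun a => ∑' n, f n a)) := by
    rw [tendsto_pi_nhds]
    intro a
    by_cases ha : a ∈ E
    · simp only [Set.indicator_of_mem ha]
      exact ((hsummable a).mp ha).hasSum.tendsto_sum_nat
    · simp only [Set.indicator_of_notMem ha]
      rw [tsum_eq_zero_of_not_summable (fun h => ha ((hsummable a).mpr h))]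
      exact tendsto_const_nhds
  exact measurable_of_tendsto_metrizable
    (fun N => (Finset.measurable_sum _ fun n _ => hf n).indicator hEmeas) htend

lemma SK.analyticOnNhd_mgf {Ω : Type*} [MeasurableSpace Ω] (P : Measure Ω) [IsProbabilityMeasure P]
    {X : Ω → ℝ} (hX : Measurable X) {a : ℝ}
    (hint : ∀ t : ℝ, |t| < a → Integrable (fun ω => rexp (t * X ω)) P) :
    AnalyticOnNhd ℝ (fun t => mgf X P t) (Set.Ioo (-a) a) := by
  intro t₁ ht₁
  have habs : |t₁| < a := abs_lt.mpr ⟨ht₁.1, ht₁.2⟩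
  set δ : ℝ := a - |t₁| with hδ
  have hδ0 : 0 < δ := by simp [hδ]; linarith
  set ρ : ℝ := 3 / 4 * δ with hρ
  set r : ℝ := δ / 2 with hr
  have hρ0 : 0 < ρ := by positivity
  have hr0 : 0 < r := by positivity
  have hrρ : r < ρ := by rw [hr, hρ]; linarith
  have hρa : |t₁| + ρ < a := by rw [hρ, hδ]; linarith
  clear_value δ ρ r
  have h1 : |t₁ + ρ| < a := by
    rcases abs_lt.mp habs with ⟨hl, hr'⟩
    rw [abs_lt]; constructor <;> nlinarith [le_abs_self t₁, neg_abs_le t₁, hρ0, hρa]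
  have h2 : |t₁ - ρ| < a := by
    rcases abs_lt.mp habs with ⟨hl, hr'⟩
    rw [abs_lt]; constructor <;> nlinarith [le_abs_self t₁, neg_abs_le t₁, hρ0, hρa]
  set Dom : Ω → ℝ := fun ω => rexp ((t₁ + ρ) * X ω) + rexp ((t₁ - ρ) * X ω) with hDom
  have hDomInt : Integrable Dom P := (hint _ h1).add (hint _ h2)
  have hDom0 : ∀ ω, 0 ≤ Dom ω := fun ω => by positivity
  -- pointwise bound
  have hptw : ∀ (n : ℕ) (ω : Ω), |X ω| ^ n * rexp (t₁ * X ω) ≤ n.factorial / ρ ^ n * Dom ω := by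
    intro n ω
    have e1 : (ρ * |X ω|) ^ n / n.factorial ≤ rexp (ρ * |X ω|) :=
      SK.pow_div_factorial_le_exp (by positivity) n
    have e2 : rexp (ρ * |X ω|) ≤ rexp (ρ * X ω) + rexp (-(ρ * X ω)) := by
      have : ρ * |X ω| = |ρ * X ω| := by rw [abs_mul, abs_of_pos hρ0]
      rw [this]; exact SK.exp_abs_le _
    have e3 : |X ω| ^ n ≤ n.factorial / ρ ^ n * (rexp (ρ * X ω) + rexp (-(ρ * X ω))) := by
      rw [mul_pow] at e1
      have hρn : (0:ℝ) < ρ ^ n := by positivity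
      rw [div_mul_eq_mul_div, le_div_iff₀ hρn]
      calc |X ω| ^ n * ρ ^ n = ρ ^ n * |X ω| ^ n := by ring
      _ ≤ n.factorial * rexp (ρ * |X ω|) := by
          have hfac : (0:ℝ) < (n.factorial : ℝ) := by positivity
          rw [div_le_iff₀ hfac] at e1
          linarith [e1]
      _ ≤ n.factorial * (rexp (ρ * X ω) + rexp (-(ρ * X ω))) := by
          exact mul_le_mul_of_nonneg_left e2 (by positivity)
    calc |X ω| ^ n * rexp (t₁ * X ω)
        ≤ (n.factorial / ρ ^ n * (rexp (ρ * X ω) + rexp (-(ρ * X ω)))) * rexp (t₁ * X ω) := by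
          exact mul_le_mul_of_nonneg_right e3 (le_of_lt (Real.exp_pos _))
    _ = n.factorial / ρ ^ n * Dom ω := by
          rw [hDom]; simp only []
          rw [mul_assoc, add_mul, ← Real.exp_add, ← Real.exp_add]
          ring_nf
  -- integrability of moments
  have hMom : ∀ n : ℕ, Integrable (fun ω => X ω ^ n * rexp (t₁ * X ω)) P := by
    intro n
    refine Integrable.mono' (hDomInt.const_mul (n.factorial / ρ ^ n)) ?_ (ae_of_all _ fun ω => ?_)
    · exact ((hX.pow_const n).mul ((hX.const_mul t₁).exp)).aestronglyMeasurable
    · simpa [Real.norm_eq_abs, abs_mul, abs_pow, abs_of_pos (Real.exp_pos _)] using hptw n ω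
  have hMomBound : ∀ n : ℕ, ∫ ω, ‖X ω ^ n * rexp (t₁ * X ω)‖ ∂P
      ≤ n.factorial / ρ ^ n * ∫ ω, Dom ω ∂P := by
    intro n
    rw [← integral_const_mul]
    refine integral_mono_of_nonneg (ae_of_all _ fun ω => norm_nonneg _)
      (hDomInt.const_mul _) (ae_of_all _ fun ω => ?_)
    simpa [Real.norm_eq_abs, abs_mul, abs_pow, abs_of_pos (Real.exp_pos _)] using hptw n ω
  set D : ℝ := ∫ ω, Dom ω ∂P with hD
  have hD0 : 0 ≤ D := integral_nonneg hDom0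
  set c : ℕ → ℝ := fun n => (∫ ω, X ω ^ n * rexp (t₁ * X ω) ∂P) / n.factorial with hc
  have hcabs : ∀ n, |c n| ≤ D / ρ ^ n := by
    intro n
    rw [hc]
    simp only [abs_div, Nat.abs_cast]
    rw [div_le_div_iff₀ (by positivity) (by positivity)]
    calc |∫ ω, X ω ^ n * rexp (t₁ * X ω) ∂P| * ρ ^ n
        ≤ (∫ ω, ‖X ω ^ n * rexp (t₁ * X ω)‖ ∂P) * ρ ^ n := by
          exact mul_le_mul_of_nonneg_right (by simpa [Real.norm_eq_abs] using norm_integral_le_integral_norm (μ := P) (fun ω => X ω ^ n * rexp (t₁ * X ω))) (by positivity)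
    _ ≤ (n.factorial / ρ ^ n * D) * ρ ^ n := by
          exact mul_le_mul_of_nonneg_right (hMomBound n) (by positivity)
    _ = D * n.factorial := by field_simp
  set p := FormalMultilinearSeries.ofScalars ℝ c with hp
  have hrle : ENNReal.ofReal r ≤ p.radius := by
    have h' : (r.toNNReal : ℝ≥0∞) ≤ p.radius := by
      apply p.le_radius_of_bound D
      intro n
      rw [hp, FormalMultilinearSeries.ofScalars_norm]
      have hco : (r.toNNReal : ℝ) = r := Real.coe_toNNReal r hr0.le
      rw [Real.norm_eq_abs, hco]
      calc |c n| * r ^ n ≤ D / ρ ^ n * r ^ n := by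
            exact mul_le_mul_of_nonneg_right (hcabs n) (by positivity)
      _ = D * (r / ρ) ^ n := by rw [div_pow, div_mul_eq_mul_div, mul_div_assoc]
      _ ≤ D * 1 := by
            refine mul_le_mul_of_nonneg_left ?_ hD0
            exact pow_le_one₀ (by positivity) (by rw [div_le_one hρ0]; exact hrρ.le)
      _ = D := mul_one D
    exact le_trans (le_of_eq rfl) h'
  refine ⟨p, ENNReal.ofReal r, hrle, ENNReal.ofReal_pos.mpr hr0, ?_⟩
  · intro y hy
    have hyr : |y| < r := by
      rw [EMetric.mem_ball, edist_zero_right, ← ofReal_norm_eq_enorm] at hy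
      have := (ENNReal.ofReal_lt_ofReal_iff_of_nonneg (norm_nonneg y)).mp hy
      rwa [Real.norm_eq_abs] at this
    set F : ℕ → Ω → ℝ := fun n ω => y ^ n / n.factorial * (X ω ^ n * rexp (t₁ * X ω)) with hF
    have hFi : ∀ n, Integrable (F n) P := fun n => (hMom n).const_mul _
    have hFnorm : ∀ n, ∫ ω, ‖F n ω‖ ∂P ≤ (|y| / ρ) ^ n * D := by
      intro n
      have : ∀ ω, ‖F n ω‖ = |y| ^ n / n.factorial * ‖X ω ^ n * rexp (t₁ * X ω)‖ := by
        intro ω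
        rw [hF]
        simp [norm_mul, norm_div, Real.norm_eq_abs, abs_pow]
      rw [integral_congr_ae (ae_of_all _ this), integral_const_mul]
      calc |y| ^ n / n.factorial * ∫ ω, ‖X ω ^ n * rexp (t₁ * X ω)‖ ∂P
          ≤ |y| ^ n / n.factorial * (n.factorial / ρ ^ n * D) := by
            exact mul_le_mul_of_nonneg_left (hMomBound n) (by positivity)
      _ = (|y| / ρ) ^ n * D := by
            rw [div_pow]
            field_simp
    have hFs : Summable fun n => ∫ ω, ‖F n ω‖ ∂P := by
      refine Summable.of_nonneg_of_le (fun n => integral_nonneg fun ω => norm_nonneg _)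
        hFnorm ?_
      exact (summable_geometric_of_lt_one (by positivity) (by rw [div_lt_one hρ0]; exact hyr.trans hrρ)).mul_right D
    have hHS := MeasureTheory.hasSum_integral_of_summable_integral_norm hFi hFs
    -- identify the sum
    have hptsum : ∀ ω, ∑' n, F n ω = rexp ((t₁ + y) * X ω) := by
      intro ω
      have h1 : HasSum (fun n => (y * X ω) ^ n / n.factorial) (rexp (y * X ω)) := by
        rw [Real.exp_eq_exp_ℝ]
        exact NormedSpace.expSeries_div_hasSum_exp (y * X ω)
      have h2 := h1.mul_right (rexp (t₁ * X ω))
      have h3 : (fun n => (y * X ω) ^ n / n.factorial * rexp (t₁ * X ω)) = fun n => F n ω := by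
        funext n
        rw [hF]; simp only [mul_pow]; ring
      rw [h3] at h2
      rw [h2.tsum_eq, ← Real.exp_add]
      ring_nf
    have hval : ∫ ω, ∑' n, F n ω ∂P = mgf X P (t₁ + y) := by
      rw [integral_congr_ae (ae_of_all _ hptsum)]; rfl
    have hcoeff : ∀ n, ∫ ω, F n ω ∂P = (p n) fun _ => y := by
      intro n
      rw [hp, FormalMultilinearSeries.ofScalars_apply_eq, smul_eq_mul]
      rw [hF]; simp only []
      rw [integral_const_mul, hc]
      ring
    rw [hval] at hHS
    have : (fun n => ∫ ω, F n ω ∂P) = fun n => (p n) fun _ => y := funext hcoeff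
    rwa [this] at hHS

section
variable {Ω : Type*} [MeasurableSpace Ω] {P : Measure Ω} [IsProbabilityMeasure P]
  {V : ℕ → Ω → ℝ}

lemma SK.identdistrib_exp (hident : ∀ j, IdentDistrib (V j) (V 0) P P) (j : ℕ) (s : ℝ) :
    IdentDistrib (fun ω => rexp (s * V j ω)) (fun ω => rexp (s * V 0 ω)) P P :=
  (hident j).comp (measurable_exp.comp (measurable_id.const_mul s))

lemma SK.exp_int_iff (hident : ∀ j, IdentDistrib (V j) (V 0) P P) (j : ℕ) (s : ℝ) :
    Integrable (fun ω => rexp (s * V j ω)) P ↔ Integrable (fun ω => rexp (s * V 0 ω)) P :=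
  (SK.identdistrib_exp hident j s).integrable_iff

lemma SK.mgf_eq_mgf (hident : ∀ j, IdentDistrib (V j) (V 0) P P) (j : ℕ) (s : ℝ) :
    mgf (V j) P s = mgf (V 0) P s :=
  (SK.identdistrib_exp hident j s).integral_eq

lemma SK.iIndep_scaled (hindep : iIndepFun V P) (d : ℕ → ℝ) :
    iIndepFun (fun j ω => d j * V j ω) P :=
  hindep.comp (fun j (x : ℝ) => d j * x) (fun j => measurable_id.const_mul (d j))

lemma SK.mgf_scaled (hident : ∀ j, IdentDistrib (V j) (V 0) P P) (j : ℕ) (d t : ℝ) :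
    mgf (fun ω => d * V j ω) P t = mgf (V 0) P (t * d) := by
  have : mgf (fun ω => d * V j ω) P t = mgf (V j) P (t * d) := by
    unfold mgf
    congr 1
    funext ω
    ring_nf
  rw [this, SK.mgf_eq_mgf hident]

/-- integrability of exp(t * partial sum) -/
lemma SK.partial_int (hmeas : ∀ j, Measurable (V j))
    (hindep : iIndepFun V P)
    (hident : ∀ j, IdentDistrib (V j) (V 0) P P)
    (d : ℕ → ℝ) (t : ℝ) (N : ℕ)
    (hint : ∀ j, Integrable (fun ω => rexp ((t * d j) * V 0 ω)) P) :
    Integrable (fun ω => rexp (t * ∑ j ∈ Finset.range N, d j * V j ω)) P := by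
  have h := (SK.iIndep_scaled hindep d).integrable_exp_mul_sum
    (fun j => (hmeas j).const_mul (d j)) (s := Finset.range N) (t := t)
    (fun j _ => by
      have := (SK.exp_int_iff hident j (t * d j)).mpr (hint j)
      simpa [mul_assoc] using this)
  have heq : (fun ω => rexp (t * (∑ j ∈ Finset.range N, fun ω' => d j * V j ω') ω))
      = fun ω => rexp (t * ∑ j ∈ Finset.range N, d j * V j ω) := by
    funext ω; simp [Finset.sum_apply]
  rwa [heq] at h

/-- mgf of partial sum = product of mgf's -/
lemma SK.partial_mgf (hmeas : ∀ j, Measurable (V j))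
    (hindep : iIndepFun V P)
    (hident : ∀ j, IdentDistrib (V j) (V 0) P P)
    (d : ℕ → ℝ) (t : ℝ) (N : ℕ) :
    mgf (fun ω => ∑ j ∈ Finset.range N, d j * V j ω) P t
      = ∏ j ∈ Finset.range N, mgf (V 0) P (t * d j) := by
  have h := (SK.iIndep_scaled hindep d).mgf_sum
    (fun j => (hmeas j).const_mul (d j)) (Finset.range N) (t := t)
  have heq : mgf (∑ j ∈ Finset.range N, fun ω' => d j * V j ω') P t
      = mgf (fun ω => ∑ j ∈ Finset.range N, d j * V j ω) P t := by
    unfold mgf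
    congr 1
    funext ω
    simp [Finset.sum_apply]
  rw [heq] at h
  rw [h]
  exact Finset.prod_congr rfl fun j _ => SK.mgf_scaled hident j (d j) t

/-- the key Taylor-type bound on the mgf of V 0 -/
lemma SK.mgf_taylor (hmeas : Measurable (V 0)) {t₀ : ℝ} (ht₀ : 0 < t₀)
    (hfin : ∀ t : ℝ, |t| < t₀ → Integrable (fun a => Real.exp (t * V 0 a)) P)
    {sb : ℝ} (hsb0 : 0 ≤ sb) (hsb : sb < t₀) :
    Integrable (V 0) P ∧ ∃ C : ℝ, 0 ≤ C ∧ ∀ s : ℝ, |s| ≤ sb →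
      mgf (V 0) P s ≤ rexp (s * (∫ ω, V 0 ω ∂P) + C * s ^ 2) := by
  set ε : ℝ := (t₀ - sb) / 2 with hε
  have hε0 : 0 < ε := by rw [hε]; linarith
  have hεt₀ : ε < t₀ := by rw [hε]; linarith
  have hsε : sb + ε < t₀ := by rw [hε]; linarith
  clear_value ε
  have hexpint : ∀ u : ℝ, |u| < t₀ → Integrable (fun ω => rexp (u * V 0 ω)) P := hfin
  -- integrability of V 0
  have hV : Integrable (V 0) P := by
    refine Integrable.mono' (((hexpint ε (by rw [abs_of_pos hε0]; exact hεt₀)).add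
      (hexpint (-ε) (by rw [abs_neg, abs_of_pos hε0]; exact hεt₀))).div_const ε)
      hmeas.aestronglyMeasurable (ae_of_all _ fun ω => ?_)
    rw [Real.norm_eq_abs]
    have := SK.abs_le_exp_add hε0 (V 0 ω)
    calc |V 0 ω| ≤ (rexp (ε * V 0 ω) + rexp (-(ε * V 0 ω))) / ε := this
    _ = (rexp (ε * V 0 ω) + rexp (-ε * V 0 ω)) / ε := by rw [neg_mul]
  -- integrability of the weight W
  set W : Ω → ℝ := fun ω => (V 0 ω) ^ 2 * (rexp (sb * V 0 ω) + rexp (-(sb * V 0 ω))) with hW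
  have hW0 : ∀ ω, 0 ≤ W ω := fun ω => by positivity
  have hWint : Integrable W P := by
    have h4 : Integrable (fun ω => 2 / ε ^ 2 * (rexp ((sb + ε) * V 0 ω) + rexp ((-sb + ε) * V 0 ω)
        + (rexp ((sb + -ε) * V 0 ω) + rexp ((-sb + -ε) * V 0 ω)))) P := by
      refine Integrable.const_mul ?_ _
      have i1 := hexpint (sb + ε) (by rw [abs_of_pos (by linarith)]; linarith)
      have i2 := hexpint (-sb + ε) (by rw [abs_lt]; constructor <;> linarith)
      have i3 := hexpint (sb + -ε) (by rw [abs_lt]; constructor <;> linarith)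
      have i4 := hexpint (-sb + -ε) (by rw [abs_lt]; constructor <;> linarith)
      exact (i1.add i2).add (i3.add i4)
    refine Integrable.mono' h4 ?_ (ae_of_all _ fun ω => ?_)
    · exact ((hmeas.pow_const 2).mul (((hmeas.const_mul sb).exp).add
        ((hmeas.const_mul sb).neg.exp))).aestronglyMeasurable
    · rw [Real.norm_eq_abs, abs_of_nonneg (hW0 ω)]
      have hsq := SK.sq_le_exp_add hε0 (V 0 ω)
      rw [hW]
      have hpos : 0 ≤ rexp (sb * V 0 ω) + rexp (-(sb * V 0 ω)) := by positivity
      calc (V 0 ω) ^ 2 * (rexp (sb * V 0 ω) + rexp (-(sb * V 0 ω)))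
          ≤ (2 / ε ^ 2 * (rexp (ε * V 0 ω) + rexp (-(ε * V 0 ω))))
            * (rexp (sb * V 0 ω) + rexp (-(sb * V 0 ω))) :=
            mul_le_mul_of_nonneg_right hsq hpos
      _ = 2 / ε ^ 2 * (rexp ((sb + ε) * V 0 ω) + rexp ((-sb + ε) * V 0 ω)
            + (rexp ((sb + -ε) * V 0 ω) + rexp ((-sb + -ε) * V 0 ω))) := by
            rw [mul_assoc]
            congr 1
            simp only [add_mul, mul_add, neg_mul, ← Real.exp_add]
            ring_nf
  refine ⟨hV, 2 * ∫ ω, W ω ∂P, by positivity, fun s hs => ?_⟩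
  have hsint : Integrable (fun ω => rexp (s * V 0 ω)) P := hexpint s (lt_of_le_of_lt hs hsb)
  -- pointwise bound
  have hpt : ∀ ω, rexp (s * V 0 ω) ≤ 1 + s * V 0 ω + s ^ 2 * (2 * W ω) := by
    intro ω
    have h1 := SK.exp_le_one_add_add (s * V 0 ω)
    have h2 : rexp (s * V 0 ω) + rexp (-(s * V 0 ω)) ≤ 2 * (rexp (sb * V 0 ω) + rexp (-(sb * V 0 ω))) := by
      have e1 : rexp (s * V 0 ω) ≤ rexp (sb * V 0 ω) + rexp (-(sb * V 0 ω)) := by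
        calc rexp (s * V 0 ω) ≤ rexp |s * V 0 ω| := Real.exp_le_exp.mpr (le_abs_self _)
        _ ≤ rexp (sb * |V 0 ω|) := by
            refine Real.exp_le_exp.mpr ?_
            rw [abs_mul]
            exact mul_le_mul_of_nonneg_right (le_trans hs (le_refl sb)) (abs_nonneg _) |>.trans
              (le_of_eq rfl)
        _ ≤ rexp (sb * V 0 ω) + rexp (-(sb * V 0 ω)) := by
            have : sb * |V 0 ω| = |sb * V 0 ω| := by rw [abs_mul, abs_of_nonneg hsb0]
            rw [this]; exact SK.exp_abs_le _
      have e2 : rexp (-(s * V 0 ω)) ≤ rexp (sb * V 0 ω) + rexp (-(sb * V 0 ω)) := by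
        calc rexp (-(s * V 0 ω)) ≤ rexp |s * V 0 ω| := Real.exp_le_exp.mpr (neg_le_abs _)
        _ ≤ rexp (sb * |V 0 ω|) := by
            refine Real.exp_le_exp.mpr ?_
            rw [abs_mul]
            exact mul_le_mul_of_nonneg_right hs (abs_nonneg _)
        _ ≤ rexp (sb * V 0 ω) + rexp (-(sb * V 0 ω)) := by
            have : sb * |V 0 ω| = |sb * V 0 ω| := by rw [abs_mul, abs_of_nonneg hsb0]
            rw [this]; exact SK.exp_abs_le _
      linarith
    have h3 : (s * V 0 ω) ^ 2 * (rexp (s * V 0 ω) + rexp (-(s * V 0 ω)))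
        ≤ s ^ 2 * (2 * W ω) := by
      rw [hW, mul_pow]
      calc s ^ 2 * (V 0 ω) ^ 2 * (rexp (s * V 0 ω) + rexp (-(s * V 0 ω)))
          ≤ s ^ 2 * (V 0 ω) ^ 2 * (2 * (rexp (sb * V 0 ω) + rexp (-(sb * V 0 ω)))) :=
            mul_le_mul_of_nonneg_left h2 (by positivity)
      _ = s ^ 2 * (2 * ((V 0 ω) ^ 2 * (rexp (sb * V 0 ω) + rexp (-(sb * V 0 ω))))) := by ring
    linarith
  -- integrate
  have hrhsint : Integrable (fun ω => 1 + s * V 0 ω + s ^ 2 * (2 * W ω)) P :=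
    ((integrable_const 1).add (hV.const_mul s)).add ((hWint.const_mul 2).const_mul (s ^ 2))
  have hmono := integral_mono hsint hrhsint (fun ω => hpt ω)
  have hia : Integrable (fun ω => 1 + s * V 0 ω) P := by
    exact (integrable_const 1).add (hV.const_mul s)
  have hib : Integrable (fun ω => s ^ 2 * (2 * W ω)) P := by
    exact (hWint.const_mul 2).const_mul (s ^ 2)
  have hsum : ∫ ω, (1 + s * V 0 ω + s ^ 2 * (2 * W ω)) ∂P
      = 1 + s * (∫ ω, V 0 ω ∂P) + s ^ 2 * (2 * ∫ ω, W ω ∂P) := by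
    rw [integral_add hia hib, integral_add (integrable_const 1) (hV.const_mul s)]
    simp [integral_const_mul]
  have : mgf (V 0) P s ≤ 1 + s * (∫ ω, V 0 ω ∂P) + s ^ 2 * (2 * ∫ ω, W ω ∂P) := by
    rw [← hsum]; exact hmono
  refine le_trans this ?_
  have := Real.add_one_le_exp (s * (∫ ω, V 0 ω ∂P) + 2 * (∫ ω, W ω ∂P) * s ^ 2)
  linarith

end

section
variable {Ω : Type*} [MeasurableSpace Ω] {P : Measure Ω} [IsProbabilityMeasure P]
  {V : ℕ → Ω → ℝ}

/-- Fatou upper bound: if each partial-sum mgf is ≤ M, the limit mgf is ≤ M, with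
integrability. -/
lemma SK.tail_bound (hmeas : ∀ j, Measurable (V j))
    (hindep : iIndepFun V P)
    (hident : ∀ j, IdentDistrib (V j) (V 0) P P)
    (d : ℕ → ℝ) (t : ℝ)
    (hconv : ∀ᵐ a ∂P, Summable fun j => d j * V j a)
    (hint : ∀ j, Integrable (fun ω => rexp ((t * d j) * V 0 ω)) P)
    (M : ℝ) (hM : ∀ N, ∏ j ∈ Finset.range N, mgf (V 0) P (t * d j) ≤ M) :
    Integrable (fun a => rexp (t * ∑' j, d j * V j a)) P ∧
      mgf (fun a => ∑' j, d j * V j a) P t ≤ M := by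
  set T : Ω → ℝ := fun a => ∑' j, d j * V j a with hT
  have hTmeas : Measurable T := SK.measurable_tsum fun j => (hmeas j).const_mul (d j)
  set S : ℕ → Ω → ℝ := fun N a => ∑ j ∈ Finset.range N, d j * V j a with hS
  have hSmeas : ∀ N, Measurable (S N) := fun N =>
    Finset.measurable_sum _ fun j _ => (hmeas j).const_mul (d j)
  have hSint : ∀ N, Integrable (fun a => rexp (t * S N a)) P := fun N =>
    SK.partial_int hmeas hindep hident d t N hint
  have hSmgf : ∀ N, mgf (S N) P t ≤ M := fun N => by
    rw [hS]; rw [SK.partial_mgf hmeas hindep hident d t N]; exact hM N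
  have hMnonneg : 0 ≤ M := le_trans zero_le_one (by simpa using hM 0)
  -- lintegral of each partial
  have hlin : ∀ N, ∫⁻ a, ENNReal.ofReal (rexp (t * S N a)) ∂P ≤ ENNReal.ofReal M := by
    intro N
    rw [← ofReal_integral_eq_lintegral_ofReal (hSint N)
      (ae_of_all _ fun a => (Real.exp_pos _).le)]
    exact ENNReal.ofReal_le_ofReal (hSmgf N)
  -- a.e. convergence
  have hae : ∀ᵐ a ∂P, Tendsto (fun N => S N a) atTop (nhds (T a)) := by
    filter_upwards [hconv] with a ha
    exact ha.hasSum.tendsto_sum_nat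
  have haelim : ∀ᵐ a ∂P, liminf (fun N => ENNReal.ofReal (rexp (t * S N a))) atTop
      = ENNReal.ofReal (rexp (t * T a)) := by
    filter_upwards [hae] with a ha
    have : Tendsto (fun N => ENNReal.ofReal (rexp (t * S N a))) atTop
        (nhds (ENNReal.ofReal (rexp (t * T a)))) := by
      exact (ENNReal.continuous_ofReal.tendsto _).comp
        ((Real.continuous_exp.tendsto _).comp ((ha.const_mul t).congr (fun _ => rfl)))
    exact this.liminf_eq
  have hkey : ∫⁻ a, ENNReal.ofReal (rexp (t * T a)) ∂P ≤ ENNReal.ofReal M := by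
    calc ∫⁻ a, ENNReal.ofReal (rexp (t * T a)) ∂P
        = ∫⁻ a, liminf (fun N => ENNReal.ofReal (rexp (t * S N a))) atTop ∂P := by
          exact lintegral_congr_ae (haelim.mono fun a ha => ha.symm)
    _ ≤ liminf (fun N => ∫⁻ a, ENNReal.ofReal (rexp (t * S N a)) ∂P) atTop := by
          exact lintegral_liminf_le fun N =>
            ENNReal.measurable_ofReal.comp (((hSmeas N).const_mul t).exp)
    _ ≤ liminf (fun _ : ℕ => ENNReal.ofReal M) atTop :=
          liminf_le_liminf (Filter.Eventually.of_forall hlin)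
    _ = ENNReal.ofReal M := liminf_const _
  have hint' : Integrable (fun a => rexp (t * T a)) P := by
    refine ⟨(((hTmeas.const_mul t).exp)).aestronglyMeasurable, ?_⟩
    rw [hasFiniteIntegral_iff_norm]
    have : ∀ a, ENNReal.ofReal ‖rexp (t * T a)‖ = ENNReal.ofReal (rexp (t * T a)) := by
      intro a; rw [Real.norm_eq_abs, abs_of_pos (Real.exp_pos _)]
    calc ∫⁻ a, ENNReal.ofReal ‖rexp (t * T a)‖ ∂P
        = ∫⁻ a, ENNReal.ofReal (rexp (t * T a)) ∂P := lintegral_congr fun a => this a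
    _ ≤ ENNReal.ofReal M := hkey
    _ < ⊤ := ENNReal.ofReal_lt_top
  refine ⟨hint', ?_⟩
  have : mgf T P t = ∫ a, rexp (t * T a) ∂P := rfl
  rw [hT] at this ⊢
  rw [this]
  have h2 : ENNReal.ofReal (∫ a, rexp (t * T a) ∂P) ≤ ENNReal.ofReal M := by
    rw [ofReal_integral_eq_lintegral_ofReal hint' (ae_of_all _ fun a => (Real.exp_pos _).le)]
    exact hkey
  have h3 := ENNReal.toReal_mono ENNReal.ofReal_ne_top h2
  rwa [ENNReal.toReal_ofReal (integral_nonneg fun a => (Real.exp_pos _).le),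
    ENNReal.toReal_ofReal hMnonneg] at h3

/-- Dichotomy: if the series converges a.s. and the coefficients are not summable,
then the mean must vanish. -/
lemma SK.summable_or_mean_zero (hmeas : ∀ j, Measurable (V j))
    (hindep : iIndepFun V P)
    (hident : ∀ j, IdentDistrib (V j) (V 0) P P)
    {t₀ : ℝ} (ht₀ : 0 < t₀)
    (hfin : ∀ t : ℝ, |t| < t₀ → Integrable (fun a => Real.exp (t * V 0 a)) P)
    (l : ℕ → ℝ) (hl0 : ∀ j, 0 ≤ l j) (hlmono : Antitone l)
    (hl2 : Summable fun j => (l j) ^ 2)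
    (hconv : ∀ᵐ a ∂P, Summable fun j => l j * V j a) :
    Summable l ∨ ∫ ω, V 0 ω ∂P = 0 := by
  by_contra hcon
  push_neg at hcon
  obtain ⟨hNS, hμ⟩ := hcon
  have hl00 : 0 < l 0 := by
    rcases lt_or_eq_of_le (hl0 0) with h | h
    · exact h
    · exfalso
      apply hNS
      have : ∀ j, l j = 0 := fun j => le_antisymm (by rw [h]; exact hlmono (Nat.zero_le j)) (hl0 j)
      exact (summable_congr fun j => (this j) ▸ rfl).mpr summable_zero
  set μ : ℝ := ∫ ω, V 0 ω ∂P with hμdef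
  set sb : ℝ := t₀ / 2 with hsb
  obtain ⟨hV, C, hC0, hC⟩ := SK.mgf_taylor (hmeas 0) ht₀ hfin (by positivity : (0:ℝ) ≤ sb)
    (by rw [hsb]; linarith : sb < t₀)
  set τ : ℝ := sb / l 0 with hτ
  have hτ0 : 0 < τ := by positivity
  set t : ℝ := if 0 < μ then -τ else τ with ht
  have htμ : t * μ = -(τ * |μ|) := by
    rcases lt_trichotomy μ 0 with h | h | h
    · rw [ht, if_neg (by linarith), abs_of_neg h]; ring
    · exact absurd h hμ
    · rw [ht, if_pos h, abs_of_pos h]; ring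
  have htabs : |t| = τ := by
    rcases lt_or_ge 0 μ with h | h
    · rw [ht, if_pos h, abs_neg, abs_of_pos hτ0]
    · rw [ht, if_neg (not_lt.mpr h), abs_of_pos hτ0]
  have hbd : ∀ j, |t * l j| ≤ sb := by
    intro j
    rw [abs_mul, htabs, abs_of_nonneg (hl0 j)]
    calc τ * l j ≤ τ * l 0 := mul_le_mul_of_nonneg_left (hlmono (Nat.zero_le j)) hτ0.le
    _ = sb := by rw [hτ]; field_simp
  have hint : ∀ j, Integrable (fun ω => rexp ((t * l j) * V 0 ω)) P := fun j =>
    hfin _ (lt_of_le_of_lt (hbd j) (by rw [hsb]; linarith))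
  -- partial products tend to zero
  set Q : ℝ := ∑' j, (l j) ^ 2 with hQ
  have hprod : ∀ N, ∏ j ∈ Finset.range N, mgf (V 0) P (t * l j)
      ≤ rexp (-(τ * |μ|) * (∑ j ∈ Finset.range N, l j) + C * t ^ 2 * Q) := by
    intro N
    calc ∏ j ∈ Finset.range N, mgf (V 0) P (t * l j)
        ≤ ∏ j ∈ Finset.range N, rexp ((t * l j) * μ + C * (t * l j) ^ 2) := by
          refine Finset.prod_le_prod (fun j _ => mgf_nonneg) fun j _ => hC _ (hbd j)
    _ = rexp (∑ j ∈ Finset.range N, ((t * l j) * μ + C * (t * l j) ^ 2)) := by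
          rw [Real.exp_sum]
    _ ≤ rexp (-(τ * |μ|) * (∑ j ∈ Finset.range N, l j) + C * t ^ 2 * Q) := by
          refine Real.exp_le_exp.mpr ?_
          rw [Finset.sum_add_distrib]
          have e1 : ∑ j ∈ Finset.range N, (t * l j) * μ
              = -(τ * |μ|) * ∑ j ∈ Finset.range N, l j := by
            rw [Finset.mul_sum]
            refine Finset.sum_congr rfl fun j _ => ?_
            calc (t * l j) * μ = (t * μ) * l j := by ring
            _ = -(τ * |μ|) * l j := by rw [htμ]
          have e2 : ∑ j ∈ Finset.range N, C * (t * l j) ^ 2 ≤ C * t ^ 2 * Q := by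
            have : ∀ j, C * (t * l j) ^ 2 = (C * t ^ 2) * (l j) ^ 2 := fun j => by ring
            rw [Finset.sum_congr rfl fun j _ => this j, ← Finset.mul_sum]
            refine mul_le_mul_of_nonneg_left ?_ (by positivity)
            exact Summable.sum_le_tsum _ (fun j _ => sq_nonneg _) hl2
          rw [e1]
          linarith
  have hΛ : Tendsto (fun N => ∑ j ∈ Finset.range N, l j) atTop atTop :=
    (not_summable_iff_tendsto_nat_atTop_of_nonneg hl0).mp hNS
  have hzero : Tendsto (fun N => rexp (-(τ * |μ|) * (∑ j ∈ Finset.range N, l j)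
      + C * t ^ 2 * Q)) atTop (nhds 0) := by
    apply Real.tendsto_exp_atBot.comp
    have hτμ : 0 < τ * |μ| := mul_pos hτ0 (abs_pos.mpr hμ)
    have h1 : Tendsto (fun N => -(τ * |μ|) * (∑ j ∈ Finset.range N, l j)) atTop atBot := by
      exact Tendsto.const_mul_atTop_of_neg (by linarith) hΛ
    exact Tendsto.atBot_add h1 tendsto_const_nhds
  -- Fatou gives zero lintegral, contradiction
  set T : Ω → ℝ := fun a => ∑' j, l j * V j a with hT
  have hTmeas : Measurable T := SK.measurable_tsum fun j => (hmeas j).const_mul (l j)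
  set S : ℕ → Ω → ℝ := fun N a => ∑ j ∈ Finset.range N, l j * V j a with hS
  have hSmeas : ∀ N, Measurable (S N) := fun N =>
    Finset.measurable_sum _ fun j _ => (hmeas j).const_mul (l j)
  have hSint : ∀ N, Integrable (fun a => rexp (t * S N a)) P := fun N =>
    SK.partial_int hmeas hindep hident l t N hint
  have hlinz : Tendsto (fun N => ∫⁻ a, ENNReal.ofReal (rexp (t * S N a)) ∂P) atTop (nhds 0) := by
    have hub : ∀ N, ∫⁻ a, ENNReal.ofReal (rexp (t * S N a)) ∂P
        ≤ ENNReal.ofReal (rexp (-(τ * |μ|) * (∑ j ∈ Finset.range N, l j) + C * t ^ 2 * Q)) := by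
      intro N
      rw [← ofReal_integral_eq_lintegral_ofReal (hSint N)
        (ae_of_all _ fun a => (Real.exp_pos _).le)]
      refine ENNReal.ofReal_le_ofReal ?_
      have := SK.partial_mgf hmeas hindep hident l t N (P := P)
      calc ∫ a, rexp (t * S N a) ∂P = mgf (S N) P t := rfl
      _ = ∏ j ∈ Finset.range N, mgf (V 0) P (t * l j) := this
      _ ≤ _ := hprod N
    have hto : Tendsto (fun N => ENNReal.ofReal (rexp (-(τ * |μ|) * (∑ j ∈ Finset.range N, l j)
        + C * t ^ 2 * Q))) atTop (nhds 0) := by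
      have := (ENNReal.continuous_ofReal.tendsto 0).comp hzero
      rw [ENNReal.ofReal_zero] at this; exact this
    exact tendsto_of_tendsto_of_tendsto_of_le_of_le tendsto_const_nhds hto
      (fun N => zero_le) hub
  have hae : ∀ᵐ a ∂P, Tendsto (fun N => S N a) atTop (nhds (T a)) := by
    filter_upwards [hconv] with a ha
    exact ha.hasSum.tendsto_sum_nat
  have haelim : ∀ᵐ a ∂P, liminf (fun N => ENNReal.ofReal (rexp (t * S N a))) atTop
      = ENNReal.ofReal (rexp (t * T a)) := by
    filter_upwards [hae] with a ha
    have : Tendsto (fun N => ENNReal.ofReal (rexp (t * S N a))) atTop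
        (nhds (ENNReal.ofReal (rexp (t * T a)))) :=
      (ENNReal.continuous_ofReal.tendsto _).comp
        ((Real.continuous_exp.tendsto _).comp ((ha.const_mul t).congr (fun _ => rfl)))
    exact this.liminf_eq
  have hzero2 : ∫⁻ a, ENNReal.ofReal (rexp (t * T a)) ∂P = 0 := by
    have hle : ∫⁻ a, ENNReal.ofReal (rexp (t * T a)) ∂P ≤ 0 := by
      calc ∫⁻ a, ENNReal.ofReal (rexp (t * T a)) ∂P
          = ∫⁻ a, liminf (fun N => ENNReal.ofReal (rexp (t * S N a))) atTop ∂P :=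
            lintegral_congr_ae (haelim.mono fun a ha => ha.symm)
      _ ≤ liminf (fun N => ∫⁻ a, ENNReal.ofReal (rexp (t * S N a)) ∂P) atTop :=
            lintegral_liminf_le fun N =>
              ENNReal.measurable_ofReal.comp (((hSmeas N).const_mul t).exp)
      _ = 0 := hlinz.liminf_eq
    exact le_antisymm hle zero_le
  have := (lintegral_eq_zero_iff
    (ENNReal.measurable_ofReal.comp ((hTmeas.const_mul t).exp))).mp hzero2
  rw [Filter.EventuallyEq] at this
  have h2 : ∀ᵐ a ∂P, False := by
    filter_upwards [this] with a ha
    simp only [Function.comp_apply, Pi.zero_apply, ENNReal.ofReal_eq_zero] at ha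
    exact absurd ha (not_le.mpr (Real.exp_pos _))
  have h3 := h2.exists
  rcases h3 with ⟨a, ha⟩
  exact ha

/-- Independence of `c • V n` from the tail sum past `n`. -/
lemma SK.indepFun_single_tail (hmeas : ∀ j, Measurable (V j))
    (hindep : iIndepFun V P)
    (n : ℕ) (c : ℝ) (e : ℕ → ℝ) (he : ∀ j, j ≤ n → e j = 0) :
    IndepFun (fun a => c * V n a) (fun a => ∑' j, e j * V j a) P := by
  set m : ℕ → MeasurableSpace Ω := fun i => MeasurableSpace.comap (V i) inferInstance with hm
  have h_le : ∀ i, m i ≤ _ := fun i => (hmeas i).comap_le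
  have hdisj : Disjoint ({n} : Set ℕ) {i | n < i} := by
    rw [Set.disjoint_left]
    intro i hi1 hi2
    rw [Set.mem_singleton_iff] at hi1
    rw [Set.mem_setOf_eq, hi1] at hi2
    exact lt_irrefl n hi2
  have hI : Indep (⨆ i ∈ ({n} : Set ℕ), m i) (⨆ i ∈ {i | n < i}, m i) P :=
    indep_iSup_of_disjoint h_le hindep.iIndep hdisj
  have hVm : ∀ i, Measurable[m i] (V i) := fun i => measurable_iff_comap_le.mpr le_rfl
  have hf : Measurable[⨆ i ∈ ({n} : Set ℕ), m i] (fun a => c * V n a) := by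
    have : Measurable[⨆ i ∈ ({n} : Set ℕ), m i] (V n) :=
      (hVm n).mono (le_biSup m (Set.mem_singleton n)) le_rfl
    exact this.const_mul c
  have hg : Measurable[⨆ i ∈ {i | n < i}, m i] (fun a => ∑' j, e j * V j a) := by
    refine SK.measurable_tsum fun j => ?_
    rcases le_or_gt j n with h | h
    · have : (fun a => e j * V j a) = fun a => (0 : ℝ) := by
        funext a; rw [he j h, zero_mul]
      rw [this]
      exact measurable_const
    · exact ((hVm j).mono (le_biSup m (by exact h : j ∈ {i | n < i})) le_rfl).const_mul (e j)
  rw [IndepFun_iff_Indep]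
  refine indep_of_indep_of_le_left (indep_of_indep_of_le_right hI ?_) ?_
  · exact measurable_iff_comap_le.mp hg
  · exact measurable_iff_comap_le.mp hf

end

section
variable {Ω : Type*} [MeasurableSpace Ω] {P : Measure Ω} [IsProbabilityMeasure P]

/-- uniform bound on partial products of mgf's -/
lemma SK.prod_bound {V0 : Ω → ℝ} (μ C : ℝ) (hC0 : 0 ≤ C)
    (d : ℕ → ℝ) (hd0 : ∀ j, 0 ≤ d j) (hd2 : Summable fun j => d j ^ 2)
    (hsum : Summable d ∨ μ = 0)
    (t sb : ℝ) (hbd : ∀ j, |t * d j| ≤ sb)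
    (hC : ∀ s : ℝ, |s| ≤ sb → mgf V0 P s ≤ rexp (s * μ + C * s ^ 2)) (N : ℕ) :
    ∏ j ∈ Finset.range N, mgf V0 P (t * d j)
      ≤ rexp (|t| * |μ| * (∑' j, d j) + C * t ^ 2 * (∑' j, d j ^ 2)) := by
  calc ∏ j ∈ Finset.range N, mgf V0 P (t * d j)
      ≤ ∏ j ∈ Finset.range N, rexp ((t * d j) * μ + C * (t * d j) ^ 2) :=
        Finset.prod_le_prod (fun j _ => mgf_nonneg) fun j _ => hC _ (hbd j)
  _ = rexp (∑ j ∈ Finset.range N, ((t * d j) * μ + C * (t * d j) ^ 2)) := by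
        rw [Real.exp_sum]
  _ ≤ rexp (|t| * |μ| * (∑' j, d j) + C * t ^ 2 * (∑' j, d j ^ 2)) := by
        refine Real.exp_le_exp.mpr ?_
        rw [Finset.sum_add_distrib]
        have e2 : ∑ j ∈ Finset.range N, C * (t * d j) ^ 2 ≤ C * t ^ 2 * (∑' j, d j ^ 2) := by
          have h : ∀ j, C * (t * d j) ^ 2 = (C * t ^ 2) * (d j) ^ 2 := fun j => by ring
          rw [Finset.sum_congr rfl fun j _ => h j, ← Finset.mul_sum]
          exact mul_le_mul_of_nonneg_left
            (Summable.sum_le_tsum _ (fun j _ => sq_nonneg _) hd2) (by positivity)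
        have e1 : ∑ j ∈ Finset.range N, (t * d j) * μ ≤ |t| * |μ| * (∑' j, d j) := by
          rcases hsum with hsd | hμ0
          · calc ∑ j ∈ Finset.range N, (t * d j) * μ
                ≤ ∑ j ∈ Finset.range N, |t| * |μ| * d j := by
                  refine Finset.sum_le_sum fun j _ => ?_
                  calc (t * d j) * μ ≤ |(t * d j) * μ| := le_abs_self _
                  _ = |t| * |μ| * d j := by
                      rw [abs_mul, abs_mul, abs_of_nonneg (hd0 j)]; ring
            _ = |t| * |μ| * ∑ j ∈ Finset.range N, d j := by rw [← Finset.mul_sum]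
            _ ≤ |t| * |μ| * (∑' j, d j) := by
                  exact mul_le_mul_of_nonneg_left
                    (Summable.sum_le_tsum _ (fun j _ => hd0 j) hsd) (by positivity)
          · rw [hμ0]
            simp
        linarith

end

set_option maxHeartbeats 2000000 in
theorem stmt0 {Ω : Type*} [MeasurableSpace Ω] (P : Measure Ω) [IsProbabilityMeasure P]
    (V : ℕ → Ω → ℝ) (hmeas : ∀ j, Measurable (V j))
    (hindep : iIndepFun V P)
    (hident : ∀ j, IdentDistrib (V j) (V 0) P P)
    (t₀ : ℝ) (ht₀ : 0 < t₀)
    (hfin : ∀ t : ℝ, |t| < t₀ → Integrable (fun a => Real.exp (t * V 0 a)) P)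
    (hnotfin : ∀ t : ℝ, t₀ ≤ |t| → ¬ Integrable (fun a => Real.exp (t * V 0 a)) P)
    (hdiv : Tendsto (fun t => mgf (V 0) P t) (nhdsWithin t₀ (Set.Iio t₀)) atTop)
    (l l' : ℕ → ℝ)
    (hl0 : ∀ j, 0 ≤ l j) (hl'0 : ∀ j, 0 ≤ l' j)
    (hlmono : Antitone l) (hl'mono : Antitone l')
    (hl2 : Summable fun j => (l j) ^ 2) (hl'2 : Summable fun j => (l' j) ^ 2)
    (j₀ : ℕ) (hagree : ∀ j < j₀, l j = l' j) (hgt : l' j₀ < l j₀)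
    (hL2conv : ∀ᵐ a ∂P, Summable (fun j => l j * V j a))
    (hL2conv' : ∀ᵐ a ∂P, Summable (fun j => l' j * V j a))
    (hsplit : IndepFun (fun a => ∑' j : ℕ, if j < j₀ then l j * V j a else 0)
        (fun a => ∑' j : ℕ, if j₀ ≤ j then l j * V j a else 0) P)
    (hsplit' : IndepFun (fun a => ∑' j : ℕ, if j < j₀ then l' j * V j a else 0)
        (fun a => ∑' j : ℕ, if j₀ ≤ j then l' j * V j a else 0) P) :
    Measure.map (fun a => ∑' j : ℕ, l j * V j a) P
      ≠ Measure.map (fun a => ∑' j : ℕ, l' j * V j a) P := by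
  intro heq
  -- basic positivity
  have hlj₀ : 0 < l j₀ := lt_of_le_of_lt (hl'0 j₀) hgt
  have hl00 : 0 < l 0 := lt_of_lt_of_le hlj₀ (hlmono (Nat.zero_le j₀))
  set μ : ℝ := ∫ ω, V 0 ω ∂P with hμdef
  set tstar : ℝ := t₀ / l 0 with htstar
  set aa : ℝ := t₀ / l j₀ with haa
  have htstar0 : 0 < tstar := by positivity
  have haa0 : 0 < aa := by positivity
  have htstaraa : tstar ≤ aa := by
    rw [htstar, haa]
    exact div_le_div_of_nonneg_left ht₀.le hlj₀ (hlmono (Nat.zero_le j₀))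
  -- the functions
  set S : Ω → ℝ := fun a => ∑' j : ℕ, l j * V j a with hS
  set S' : Ω → ℝ := fun a => ∑' j : ℕ, l' j * V j a with hS'
  set A : Ω → ℝ := fun a => ∑' j : ℕ, if j < j₀ then l j * V j a else 0 with hA
  set A' : Ω → ℝ := fun a => ∑' j : ℕ, if j < j₀ then l' j * V j a else 0 with hA'
  set T : Ω → ℝ := fun a => ∑' j : ℕ, if j₀ ≤ j then l j * V j a else 0 with hT
  set T' : Ω → ℝ := fun a => ∑' j : ℕ, if j₀ ≤ j then l' j * V j a else 0 with hT'
  -- coefficient vectors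
  set d : ℕ → ℝ := fun j => if j₀ ≤ j then l j else 0 with hd
  set d' : ℕ → ℝ := fun j => if j₀ ≤ j then l' j else 0 with hd'
  set e : ℕ → ℝ := fun j => if j₀ < j then l j else 0 with he
  set Tp : Ω → ℝ := fun a => ∑' j : ℕ, e j * V j a with hTp
  have hd0 : ∀ j, 0 ≤ d j := fun j => by rw [hd]; dsimp only; split <;> [exact hl0 j; exact le_rfl]
  have hd'0 : ∀ j, 0 ≤ d' j := fun j => by rw [hd']; dsimp only; split <;> [exact hl'0 j; exact le_rfl]
  have he0 : ∀ j, 0 ≤ e j := fun j => by rw [he]; dsimp only; split <;> [exact hl0 j; exact le_rfl]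
  have hdle : ∀ j, d j ≤ l j₀ := fun j => by
    rw [hd]; dsimp only; split <;> [exact hlmono ‹_›; exact hlj₀.le]
  have hd'le : ∀ j, d' j ≤ l' j₀ := fun j => by
    rw [hd']; dsimp only; split <;> [exact hl'mono ‹_›; exact (hl'0 j₀)]
  have hele : ∀ j, e j ≤ l j₀ := fun j => by
    rw [he]; dsimp only; split <;> [exact hlmono (le_of_lt ‹_›); exact hlj₀.le]
  -- measurability
  have hSmeas : Measurable S := SK.measurable_tsum fun j => (hmeas j).const_mul (l j)
  have hS'meas : Measurable S' := SK.measurable_tsum fun j => (hmeas j).const_mul (l' j)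
  have hmeas_ite : ∀ (c : ℕ → ℝ) (Q : ℕ → Prop) [DecidablePred Q],
      Measurable (fun a => (∑' j : ℕ, if Q j then c j * V j a else 0 : ℝ)) := by
    intro c Q _
    refine SK.measurable_tsum fun j => ?_
    by_cases h : Q j
    · simpa [h] using (hmeas j).const_mul (c j)
    · simpa [h] using measurable_const (a := (0:ℝ)) (m := by infer_instance)
  have hAmeas : Measurable A := hmeas_ite l (fun j => j < j₀)
  have hTmeas : Measurable T := hmeas_ite l (fun j => j₀ ≤ j)
  have hT'meas : Measurable T' := hmeas_ite l' (fun j => j₀ ≤ j)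
  have hTpmeas : Measurable Tp := SK.measurable_tsum fun j => (hmeas j).const_mul (e j)
  -- T as a "d-weighted" series, etc.
  have hTd : T = fun a => ∑' j, d j * V j a := by
    funext a; rw [hT, hd]
    exact tsum_congr fun j => by dsimp only; split <;> simp
  have hT'd : T' = fun a => ∑' j, d' j * V j a := by
    funext a; rw [hT', hd']
    exact tsum_congr fun j => by dsimp only; split <;> simp
  -- summability of indicator pieces
  have hsum_ite : ∀ (f : ℕ → ℝ) (Q : ℕ → Prop) [DecidablePred Q], Summable f →
      Summable (fun j => if Q j then f j else 0) := by
    intro f Q _ hf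
    have := hf.indicator {j | Q j}
    refine this.congr fun j => ?_
    simp [Set.indicator_apply, Set.mem_setOf_eq]
  -- dichotomies
  have hdich : Summable l ∨ μ = 0 :=
    SK.summable_or_mean_zero hmeas hindep hident ht₀ hfin l hl0 hlmono hl2 hL2conv
  have hdich' : Summable l' ∨ μ = 0 :=
    SK.summable_or_mean_zero hmeas hindep hident ht₀ hfin l' hl'0 hl'mono hl'2 hL2conv'
  have hdichd : Summable d ∨ μ = 0 := hdich.imp (fun h => hsum_ite l _ h) id
  have hdichd' : Summable d' ∨ μ = 0 := hdich'.imp (fun h => hsum_ite l' _ h) id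
  have hdiche : Summable e ∨ μ = 0 := hdich.imp (fun h => hsum_ite l _ h) id
  have hd2 : Summable fun j => d j ^ 2 := by
    refine (hsum_ite (fun j => l j ^ 2) (fun j => j₀ ≤ j) hl2).congr fun j => ?_
    rw [hd]; dsimp only; split <;> simp
  have hd'2 : Summable fun j => d' j ^ 2 := by
    refine (hsum_ite (fun j => l' j ^ 2) (fun j => j₀ ≤ j) hl'2).congr fun j => ?_
    rw [hd']; dsimp only; split <;> simp
  have he2 : Summable fun j => e j ^ 2 := by
    refine (hsum_ite (fun j => l j ^ 2) (fun j => j₀ < j) hl2).congr fun j => ?_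
    rw [he]; dsimp only; split <;> simp
  -- a.e. summability of the weighted series
  have hconvd : ∀ᵐ a ∂P, Summable fun j => d j * V j a := by
    filter_upwards [hL2conv] with a ha
    refine (hsum_ite (fun j => l j * V j a) (fun j => j₀ ≤ j) ha).congr fun j => ?_
    rw [hd]; dsimp only; split <;> simp
  have hconvd' : ∀ᵐ a ∂P, Summable fun j => d' j * V j a := by
    filter_upwards [hL2conv'] with a ha
    refine (hsum_ite (fun j => l' j * V j a) (fun j => j₀ ≤ j) ha).congr fun j => ?_
    rw [hd']; dsimp only; split <;> simp
  have hconve : ∀ᵐ a ∂P, Summable fun j => e j * V j a := by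
    filter_upwards [hL2conv] with a ha
    refine (hsum_ite (fun j => l j * V j a) (fun j => j₀ < j) ha).congr fun j => ?_
    rw [he]; dsimp only; split <;> simp
  -- mgf equality from equal laws
  have hmgfeq : ∀ t, mgf S P t = mgf S' P t := by
    intro t
    have hexp : Continuous fun x : ℝ => rexp (t * x) := by continuity
    have h1 : mgf S P t = ∫ x, rexp (t * x) ∂(Measure.map S P) := by
      rw [integral_map hSmeas.aemeasurable hexp.aestronglyMeasurable]; rfl
    have h2 : mgf S' P t = ∫ x, rexp (t * x) ∂(Measure.map S' P) := by
      rw [integral_map hS'meas.aemeasurable hexp.aestronglyMeasurable]; rfl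
    rw [h1, h2, hS, hS', heq]
  -- A is a finite sum, A' = A
  have hAfin : A = fun a => ∑ j ∈ Finset.range j₀, l j * V j a := by
    funext a
    simp only [hA]
    rw [tsum_eq_sum (s := Finset.range j₀)
      (fun b hb => if_neg (fun hc => hb (Finset.mem_range.mpr hc)))]
    exact Finset.sum_congr rfl fun j hj => if_pos (Finset.mem_range.mp hj)
  have hA'A : A' = A := by
    rw [hA', hA]
    funext a
    exact tsum_congr fun j => by
      by_cases h : j < j₀
      · rw [if_pos h, if_pos h, hagree j h]
      · rw [if_neg h, if_neg h]
  -- integrability of exp(t A) for |t| < tstar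
  have hexpVint : ∀ s : ℝ, |s| < t₀ → ∀ j, Integrable (fun ω => rexp (s * V j ω)) P :=
    fun s hs j => (SK.exp_int_iff hident j s).mpr (hfin s hs)
  have hAint : ∀ t : ℝ, |t| < tstar → Integrable (fun a => rexp (t * A a)) P := by
    intro t ht
    rw [hAfin]
    refine SK.partial_int hmeas hindep hident l t j₀ fun j => ?_
    refine hfin _ ?_
    calc |t * l j| = |t| * l j := by rw [abs_mul, abs_of_nonneg (hl0 j)]
    _ ≤ |t| * l 0 := mul_le_mul_of_nonneg_left (hlmono (Nat.zero_le j)) (abs_nonneg t)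
    _ < tstar * l 0 := by
        exact mul_lt_mul_of_pos_right ht hl00
    _ = t₀ := by rw [htstar]; field_simp
  -- Taylor data for two scales
  -- generic per-t bound producing integrability of exp(t*T), exp(t*T'), exp(t*Tp)
  have htail : ∀ (c : ℕ → ℝ), (∀ j, 0 ≤ c j) → (∀ j, c j ≤ l j₀) →
      (Summable c ∨ μ = 0) → (Summable fun j => c j ^ 2) →
      (∀ᵐ a ∂P, Summable fun j => c j * V j a) →
      ∀ t : ℝ, |t| < aa →
      Integrable (fun a => rexp (t * ∑' j, c j * V j a)) P := by
    intro c hc0 hcle hcsum hc2 hcconv t ht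
    have hsb : |t| * l j₀ < t₀ := by
      calc |t| * l j₀ < aa * l j₀ := mul_lt_mul_of_pos_right ht hlj₀
      _ = t₀ := by rw [haa]; field_simp
    have hbd : ∀ j, |t * c j| ≤ |t| * l j₀ := fun j => by
      rw [abs_mul]
      exact mul_le_mul_of_nonneg_left (by rw [abs_of_nonneg (hc0 j)]; exact hcle j) (abs_nonneg t)
    obtain ⟨hV, C, hC0, hC⟩ := SK.mgf_taylor (hmeas 0) ht₀ hfin
      (by positivity : (0:ℝ) ≤ |t| * l j₀) hsb
    exact (SK.tail_bound hmeas hindep hident c t hcconv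
      (fun j => hfin _ (lt_of_le_of_lt (hbd j) hsb))
      _ (SK.prod_bound μ C hC0 c hc0 hc2 hcsum t _ hbd hC)).1
  have hTint : ∀ t : ℝ, |t| < aa → Integrable (fun a => rexp (t * T a)) P := by
    intro t ht; rw [hTd]; exact htail d hd0 hdle hdichd hd2 hconvd t ht
  have hT'int : ∀ t : ℝ, |t| < aa → Integrable (fun a => rexp (t * T' a)) P := by
    intro t ht; rw [hT'd]
    exact htail d' hd'0 (fun j => (hd'le j).trans hgt.le) hdichd' hd'2 hconvd' t ht
  have hTpint : ∀ t : ℝ, |t| < aa → Integrable (fun a => rexp (t * Tp a)) P := by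
    intro t ht; exact htail e he0 hele hdiche he2 hconve t ht
  -- splitting S = A + T a.e., and the mgf product
  have hsplitS : S =ᵐ[P] A + T := by
    filter_upwards [hL2conv] with a ha
    have hs1 : Summable fun j => if j < j₀ then l j * V j a else 0 :=
      hsum_ite _ _ ha
    have hs2 : Summable fun j => if j₀ ≤ j then l j * V j a else 0 :=
      hsum_ite _ _ ha
    have hptq : ∀ j : ℕ, l j * V j a = (if j < j₀ then l j * V j a else 0)
        + (if j₀ ≤ j then l j * V j a else 0) := by
      intro j
      by_cases h : j < j₀
      · rw [if_pos h, if_neg (not_le.mpr h), add_zero]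
      · rw [if_neg h, if_pos (not_lt.mp h), zero_add]
    calc S a = ∑' j, ((if j < j₀ then l j * V j a else 0)
        + (if j₀ ≤ j then l j * V j a else 0)) := by
          rw [hS]; exact tsum_congr hptq
    _ = A a + T a := Summable.tsum_add hs1 hs2
  have hsplitS' : S' =ᵐ[P] A' + T' := by
    filter_upwards [hL2conv'] with a ha
    have hs1 : Summable fun j => if j < j₀ then l' j * V j a else 0 := hsum_ite _ _ ha
    have hs2 : Summable fun j => if j₀ ≤ j then l' j * V j a else 0 := hsum_ite _ _ ha
    have hptq : ∀ j : ℕ, l' j * V j a = (if j < j₀ then l' j * V j a else 0)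
        + (if j₀ ≤ j then l' j * V j a else 0) := by
      intro j
      by_cases h : j < j₀
      · rw [if_pos h, if_neg (not_le.mpr h), add_zero]
      · rw [if_neg h, if_pos (not_lt.mp h), zero_add]
    calc S' a = ∑' j, ((if j < j₀ then l' j * V j a else 0)
        + (if j₀ ≤ j then l' j * V j a else 0)) := by
          rw [hS']; exact tsum_congr hptq
    _ = A' a + T' a := Summable.tsum_add hs1 hs2
  have hmgf_congr : ∀ (X Y : Ω → ℝ), X =ᵐ[P] Y → ∀ t, mgf X P t = mgf Y P t := by
    intro X Y hXY t
    refine integral_congr_ae ?_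
    filter_upwards [hXY] with a ha
    simp [ha]
  have hmgfS : ∀ t, mgf S P t = mgf A P t * mgf T P t := fun t =>
    (hmgf_congr _ _ hsplitS t).trans
      (hsplit.mgf_add' hAmeas.aestronglyMeasurable hTmeas.aestronglyMeasurable)
  have hmgfS' : ∀ t, mgf S' P t = mgf A P t * mgf T' P t := fun t => by
    rw [hmgf_congr _ _ hsplitS' t, ← hA'A]
    exact hsplit'.mgf_add' (hA'A ▸ hAmeas).aestronglyMeasurable hT'meas.aestronglyMeasurable
  -- positivity of mgf A
  have hApos : ∀ t : ℝ, |t| < tstar → 0 < mgf A P t := fun t ht => mgf_pos (hAint t ht)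
  -- cancellation on (-tstar, tstar)
  have hTT' : ∀ t : ℝ, |t| < tstar → mgf T P t = mgf T' P t := by
    intro t ht
    have h := (hmgfS t).symm.trans ((hmgfeq t).trans (hmgfS' t))
    exact mul_left_cancel₀ (ne_of_gt (hApos t ht)) h
  -- analytic continuation to (-aa, aa)
  have hTanal : AnalyticOnNhd ℝ (fun t => mgf T P t) (Set.Ioo (-aa) aa) :=
    SK.analyticOnNhd_mgf P hTmeas hTint
  have hT'anal : AnalyticOnNhd ℝ (fun t => mgf T' P t) (Set.Ioo (-aa) aa) :=
    SK.analyticOnNhd_mgf P hT'meas hT'int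
  have h0mem : (0:ℝ) ∈ Set.Ioo (-aa) aa := ⟨by linarith, haa0⟩
  have hev : (fun t => mgf T P t) =ᶠ[nhds 0] fun t => mgf T' P t := by
    have hmem : Set.Ioo (-tstar) tstar ∈ nhds (0:ℝ) := Ioo_mem_nhds (by linarith) htstar0
    filter_upwards [hmem] with t ht
    exact hTT' t (abs_lt.mpr ⟨ht.1, ht.2⟩)
  have hEq : Set.EqOn (fun t => mgf T P t) (fun t => mgf T' P t) (Set.Ioo (-aa) aa) :=
    hTanal.eqOn_of_preconnected_of_eventuallyEq hT'anal isPreconnected_Ioo h0mem hev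
  -- split T at j₀ : T = l j₀ • V j₀ + Tp
  have hsplitT : T =ᵐ[P] (fun a => l j₀ * V j₀ a) + Tp := by
    filter_upwards [hL2conv] with a ha
    have hs1 : Summable fun j => if j = j₀ then l j * V j a else 0 := by
      apply summable_of_ne_finset_zero (s := {j₀})
      intro b hb
      exact if_neg (by simpa using hb)
    have hs2 : Summable fun j => if j₀ < j then l j * V j a else 0 := hsum_ite _ _ ha
    have hptq : ∀ j : ℕ, (if j₀ ≤ j then l j * V j a else 0)
        = (if j = j₀ then l j * V j a else 0) + (if j₀ < j then l j * V j a else 0) := by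
      intro j
      rcases lt_trichotomy j j₀ with h | h | h
      · rw [if_neg (not_le.mpr h), if_neg (by omega), if_neg (by omega), add_zero]
      · subst h
        rw [if_pos le_rfl, if_pos rfl, if_neg (lt_irrefl j), add_zero]
      · rw [if_pos h.le, if_neg (by omega), if_pos h, zero_add]
    have hstep : T a = ∑' j, ((if j = j₀ then l j * V j a else 0)
        + (if j₀ < j then l j * V j a else 0)) := by
      simp only [hT]
      exact tsum_congr hptq
    rw [hstep, Summable.tsum_add hs1 hs2]
    have h1 : ∑' j, (if j = j₀ then l j * V j a else 0) = l j₀ * V j₀ a := by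
      rw [tsum_eq_single j₀ (fun b hb => if_neg hb), if_pos rfl]
    have h2 : ∑' j, (if j₀ < j then l j * V j a else 0) = Tp a := by
      simp only [hTp, he]
      exact tsum_congr fun j => by split <;> simp
    rw [h1, h2]
    rfl
  have hindepTp : IndepFun (fun a => l j₀ * V j₀ a) Tp P := by
    refine SK.indepFun_single_tail hmeas hindep j₀ (l j₀) e fun j hj => ?_
    rw [he]
    exact if_neg (not_lt.mpr hj)
  have hmgfT : ∀ t : ℝ, mgf T P t = mgf (V 0) P (t * l j₀) * mgf Tp P t := by
    intro t
    rw [hmgf_congr _ _ hsplitT t,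
      hindepTp.mgf_add' ((hmeas j₀).const_mul (l j₀)).aestronglyMeasurable
        hTpmeas.aestronglyMeasurable,
      SK.mgf_scaled hident j₀ (l j₀) t]
  -- choose K with P(Tp ≥ -K) ≥ 1/2
  obtain ⟨K, hK⟩ : ∃ K : ℕ, (2⁻¹ : ℝ≥0∞) ≤ P {a | -(K:ℝ) ≤ Tp a} := by
    set sets : ℕ → Set Ω := fun n => {a | -(n:ℝ) ≤ Tp a} with hsets
    have hmono : Monotone sets := by
      intro m n hmn a ha
      have h1 : -(n:ℝ) ≤ -(m:ℝ) := neg_le_neg (Nat.cast_le.mpr hmn)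
      exact le_trans h1 ha
    have huniv : (⋃ n, sets n) = Set.univ := by
      ext a
      simp only [Set.mem_iUnion, Set.mem_univ, iff_true, hsets, Set.mem_setOf_eq]
      obtain ⟨n, hn⟩ := exists_nat_ge (-(Tp a))
      exact ⟨n, by linarith⟩
    have htend := tendsto_measure_iUnion_atTop (μ := P) hmono
    rw [huniv, measure_univ] at htend
    have h2 := htend.eventually (lt_mem_nhds (by norm_num : (2⁻¹ : ℝ≥0∞) < 1))
    obtain ⟨K, hK⟩ := h2.exists
    exact ⟨K, hK.le⟩
  have hKset : MeasurableSet {a | -(K:ℝ) ≤ Tp a} := by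
    have : {a | -(K:ℝ) ≤ Tp a} = Tp ⁻¹' (Set.Ici (-(K:ℝ))) := rfl
    rw [this]
    exact hTpmeas measurableSet_Ici
  -- lower bound for mgf Tp on [0, aa)
  set cc : ℝ := rexp (-(aa * K)) * (1/2) with hcc
  have hcc0 : 0 < cc := by positivity
  have hTplow : ∀ t : ℝ, 0 ≤ t → t < aa → cc ≤ mgf Tp P t := by
    intro t ht0 htaa
    have hint := hTpint t (by rwa [abs_of_nonneg ht0])
    have hlow : ∀ a, ({a | -(K:ℝ) ≤ Tp a}).indicator (fun _ => rexp (-(t * K))) a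
        ≤ rexp (t * Tp a) := by
      intro a
      by_cases hmem : a ∈ {a | -(K:ℝ) ≤ Tp a}
      · rw [Set.indicator_of_mem hmem]
        refine Real.exp_le_exp.mpr ?_
        have h1 : -(K:ℝ) ≤ Tp a := hmem
        nlinarith
      · rw [Set.indicator_of_notMem hmem]
        positivity
    have hmono2 := integral_mono_of_nonneg
      (ae_of_all _ fun a => Set.indicator_nonneg (fun _ _ => (Real.exp_pos _).le) a)
      hint (ae_of_all _ hlow)
    rw [integral_indicator_const _ hKset] at hmono2
    have htr : (1/2 : ℝ) ≤ (P {a | -(K:ℝ) ≤ Tp a}).toReal := by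
      have h3 := ENNReal.toReal_mono (measure_ne_top P _) hK
      simpa using h3
    have hexp2 : rexp (-(aa * K)) ≤ rexp (-(t * K)) := by
      refine Real.exp_le_exp.mpr ?_
      have h4 : t * K ≤ aa * K := mul_le_mul_of_nonneg_right htaa.le (Nat.cast_nonneg K)
      linarith
    have h2 : cc ≤ (P {a | -(K:ℝ) ≤ Tp a}).toReal * rexp (-(t * K)) := by
      calc cc = rexp (-(aa*K)) * (1/2) := hcc
      _ ≤ rexp (-(t*K)) * (P {a | -(K:ℝ) ≤ Tp a}).toReal :=
          mul_le_mul hexp2 htr (by norm_num) (Real.exp_pos _).le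
      _ = (P {a | -(K:ℝ) ≤ Tp a}).toReal * rexp (-(t*K)) := mul_comm _ _
    refine le_trans h2 ?_
    rw [smul_eq_mul] at hmono2
    exact hmono2
  -- uniform upper bound for mgf T' on [0, aa)
  have hl'aa : aa * l' j₀ < t₀ := by
    calc aa * l' j₀ ≤ aa * l' j₀ := le_rfl
    _ < aa * l j₀ := mul_lt_mul_of_pos_left hgt haa0
    _ = t₀ := by rw [haa]; field_simp
  have hl'aa0 : 0 ≤ aa * l' j₀ := mul_nonneg haa0.le (hl'0 j₀)
  set sb2 : ℝ := (aa * l' j₀ + t₀)/2 with hsb2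
  have hsb20 : 0 ≤ sb2 := by rw [hsb2]; linarith
  have hsb2t₀ : sb2 < t₀ := by rw [hsb2]; linarith
  obtain ⟨hV, C2, hC20, hC2⟩ := SK.mgf_taylor (hmeas 0) ht₀ hfin hsb20 hsb2t₀
  set Cb : ℝ := rexp (aa * |μ| * (∑' j, d' j) + C2 * aa^2 * (∑' j, d' j ^ 2)) with hCb
  have hT'up : ∀ t : ℝ, 0 ≤ t → t < aa → mgf T' P t ≤ Cb := by
    intro t ht0 htaa
    have hbd : ∀ j, |t * d' j| ≤ sb2 := by
      intro j
      rw [abs_mul, abs_of_nonneg ht0, abs_of_nonneg (hd'0 j)]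
      calc t * d' j ≤ aa * l' j₀ := mul_le_mul htaa.le (hd'le j) (hd'0 j) haa0.le
      _ ≤ sb2 := by rw [hsb2]; linarith
    have hb := (SK.tail_bound hmeas hindep hident d' t hconvd'
      (fun j => hfin _ (lt_of_le_of_lt (hbd j) hsb2t₀)) _
      (SK.prod_bound μ C2 hC20 d' hd'0 hd'2 hdichd' t sb2 hbd hC2)).2
    rw [hT'd]
    refine le_trans hb ?_
    rw [hCb]
    refine Real.exp_le_exp.mpr ?_
    have h1 : |t| * |μ| * (∑' j, d' j) ≤ aa * |μ| * (∑' j, d' j) := by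
      refine mul_le_mul_of_nonneg_right
        (mul_le_mul_of_nonneg_right ?_ (abs_nonneg μ)) (tsum_nonneg hd'0)
      rw [abs_of_nonneg ht0]; exact htaa.le
    have h2 : C2 * t^2 * (∑' j, d' j ^ 2) ≤ C2 * aa^2 * (∑' j, d' j ^ 2) := by
      refine mul_le_mul_of_nonneg_right ?_ (tsum_nonneg fun j => sq_nonneg _)
      refine mul_le_mul_of_nonneg_left ?_ hC20
      nlinarith
    linarith
  -- extract a point where mgf (V 0) is huge
  set R : ℝ := Cb / cc with hR
  have hev2 : ∀ᶠ sv in nhdsWithin t₀ (Set.Iio t₀),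
      R < mgf (V 0) P sv ∧ 0 < sv ∧ sv < t₀ := by
    have h1 := hdiv.eventually (eventually_gt_atTop R)
    have h2 : ∀ᶠ sv in nhdsWithin t₀ (Set.Iio t₀), 0 < sv :=
      Filter.eventually_iff_exists_mem.mpr ⟨Set.Ioi 0 ∩ Set.Iio t₀,
        inter_mem (mem_nhdsWithin_of_mem_nhds (Ioi_mem_nhds ht₀)) self_mem_nhdsWithin,
        fun x hx => hx.1⟩
    have h3 : ∀ᶠ sv in nhdsWithin t₀ (Set.Iio t₀), sv < t₀ :=
      eventually_mem_nhdsWithin.mono fun x hx => hx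
    exact (h1.and (h2.and h3)).mono fun x hx => ⟨hx.1, hx.2.1, hx.2.2⟩
  obtain ⟨sv, hsvR, hsv0, hsvt₀⟩ := hev2.exists
  set tt : ℝ := sv / l j₀ with htt
  have htt0 : 0 ≤ tt := by positivity
  have httaa : tt < aa := by
    rw [htt, haa]
    exact div_lt_div_of_pos_right hsvt₀ hlj₀
  have httl : tt * l j₀ = sv := div_mul_cancel₀ sv (ne_of_gt hlj₀)
  have httIoo : tt ∈ Set.Ioo (-aa) aa := ⟨by linarith, httaa⟩
  have heq1 : mgf T P tt = mgf T' P tt := hEq httIoo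
  have hfinal : mgf (V 0) P sv * cc ≤ Cb := by
    calc mgf (V 0) P sv * cc ≤ mgf (V 0) P sv * mgf Tp P tt :=
          mul_le_mul_of_nonneg_left (hTplow tt htt0 httaa) mgf_nonneg
    _ = mgf T P tt := by rw [hmgfT tt, httl]
    _ = mgf T' P tt := heq1
    _ ≤ Cb := hT'up tt htt0 httaa
  have hcontra : mgf (V 0) P sv ≤ R := by
    rw [hR, le_div_iff₀ hcc0]
    exact hfinal
  linarith
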